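/- If λ ∈ ℂ and φ ∈ L²(I;ℂ) with φ ≠ 0 satisfy 𝓛φ = λφ, then either λ = 0 or λ = 4Kκ − p − (2K/(πℓ))·sin(2πℓκ) for some integer ℓ ≥ 1. In other words, the only eigenvalues of 𝓛 are 0 (with eigenfunction 1) and the numbers λ_ℓ = 4Kκ − p − (2K/(πℓ)) sin(2πℓκ), ℓ ∈ ℕ. -/

import Mathlib

open MeasureTheory Real Set

noncomputable section

/-- The Lebesgue measure restricted to the interval `I = [0,1]`. -/
def μI : MeasureTheory.Measure ℝ := MeasureTheory.volume.restrict (Set.Icc (0:ℝ) 1)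

/-- The graphon of the `κ`-nearest neighbor graph. -/
def W2 (κ : ℝ) (x y : ℝ) : ℝ := if |x - y| ≤ κ ∨ 1 - κ ≤ |x - y| then 1 else 0

/-- The linearization `𝓛` of the continuum limit about `u ≡ 0`, acting on complex-valued
functions: `(𝓛φ)(x) = ∫₀¹ (p - 2K·W₂(x,y))(φ(y) - φ(x)) dy`. -/
def LopC (p K κ : ℝ) (φ : ℝ → ℂ) (x : ℝ) : ℂ :=
  ∫ y in Set.Icc (0:ℝ) 1, (((p - 2 * K * W2 κ x y : ℝ)) : ℂ) * (φ y - φ x)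

namespace LopAux

noncomputable def E (n : ℤ) (x : ℝ) : ℂ := Complex.exp (2 * π * Complex.I * n * x)

lemma E_apply (n : ℤ) (x : ℝ) : E n x = Complex.exp ((2 * π * Complex.I * n) * x) := rfl

lemma contE (n : ℤ) : Continuous (E n) := by
  unfold E; fun_prop

lemma cne (n : ℤ) (hn : n ≠ 0) : (2 * (π:ℂ) * Complex.I * n) ≠ 0 :=
  mul_ne_zero (mul_ne_zero (mul_ne_zero two_ne_zero
    (Complex.ofReal_ne_zero.2 Real.pi_ne_zero)) Complex.I_ne_zero) (Int.cast_ne_zero.2 hn)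

lemma E_add (n : ℤ) (a b : ℝ) : E n (a + b) = E n a * E n b := by
  simp only [E_apply]; rw [← Complex.exp_add]; push_cast; ring_nf

lemma E_one (n : ℤ) : E n 1 = 1 := by
  have := Complex.exp_int_mul_two_pi_mul_I n
  simp only [E_apply]
  rw [← this]; congr 1; push_cast; ring

lemma E_per (n : ℤ) (x : ℝ) : E n (x + 1) = E n x := by
  rw [E_add, E_one, mul_one]

lemma E_zero_eq (x : ℝ) : E 0 x = 1 := by simp [E]

lemma norm_E (n : ℤ) (x : ℝ) : ‖E n x‖ ≤ 1 := by
  simp only [E_apply]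
  rw [Complex.norm_exp]
  have : ((2 * (π:ℂ) * Complex.I * n) * x).re = 0 := by simp [Complex.ext_iff]
  rw [this]; simp

lemma intE {n : ℤ} (hn : n ≠ 0) (a b : ℝ) :
    ∫ x in a..b, E n x = (E n b - E n a) / (2 * π * Complex.I * n) := by
  simp only [E_apply]
  exact integral_exp_mul_complex (cne n hn)

lemma sin_formula {n : ℤ} (hn : n ≠ 0) (t : ℝ) :
    (E n t - E n (-t)) / (2 * π * Complex.I * n)
      = ((Real.sin (2 * π * n * t) / (π * n) : ℝ) : ℂ) := by
  have h1 : E n t = Complex.exp (((2 * π * n * t : ℝ) : ℂ) * Complex.I) := by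
    simp only [E_apply]; congr 1; push_cast; ring
  have h2 : E n (-t) = Complex.exp ((-(2 * π * n * t : ℝ) : ℂ) * Complex.I) := by
    simp only [E_apply]; congr 1; push_cast; ring
  rw [h1, h2, Complex.exp_mul_I, Complex.exp_mul_I, Complex.cos_neg, Complex.sin_neg,
    ← Complex.ofReal_sin, ← Complex.ofReal_cos]
  have hπ : (π:ℂ) ≠ 0 := Complex.ofReal_ne_zero.2 Real.pi_ne_zero
  have hnn : (n:ℂ) ≠ 0 := Int.cast_ne_zero.2 hn
  have hI := Complex.I_ne_zero
  push_cast
  field_simp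
  ring_nf


lemma W2_nonneg (κ x y : ℝ) : 0 ≤ W2 κ x y := by unfold W2; split <;> norm_num

lemma W2_le_one (κ x y : ℝ) : W2 κ x y ≤ 1 := by unfold W2; split <;> norm_num

lemma W2_symm (κ x y : ℝ) : W2 κ x y = W2 κ y x := by unfold W2; rw [abs_sub_comm]

lemma measurable_W2 (κ y : ℝ) : Measurable fun x => W2 κ x y := by
  unfold W2
  have h : Measurable fun x : ℝ => |x - y| := (measurable_id.sub measurable_const).abs
  exact Measurable.ite ((measurableSet_le h measurable_const).union
    (measurableSet_le measurable_const h)) measurable_const measurable_const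

lemma intervalIntegrable_W2mul (κ y : ℝ) {f : ℝ → ℂ} (hf : Continuous f) (a b : ℝ) :
    IntervalIntegrable (fun x => ((W2 κ x y : ℝ) : ℂ) * f x) volume a b := by
  apply (hf.intervalIntegrable a b).mono_fun
  · exact ((Complex.measurable_ofReal.comp (measurable_W2 κ y)).mul
      hf.measurable).aestronglyMeasurable
  · filter_upwards with x
    rw [norm_mul]
    have h1 : ‖((W2 κ x y : ℝ) : ℂ)‖ ≤ 1 := by
      rw [Complex.norm_real, Real.norm_eq_abs, abs_of_nonneg (W2_nonneg κ x y)]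
      exact W2_le_one κ x y
    calc ‖((W2 κ x y : ℝ) : ℂ)‖ * ‖f x‖ ≤ 1 * ‖f x‖ :=
          mul_le_mul_of_nonneg_right h1 (norm_nonneg _)
      _ = ‖f x‖ := one_mul _

lemma W2_eq_one {κ x y : ℝ} (h : |x - y| ≤ κ ∨ 1 - κ ≤ |x - y|) : W2 κ x y = 1 := if_pos h

lemma W2_eq_zero {κ x y : ℝ} (h1 : κ < |x - y|) (h2 : |x - y| < 1 - κ) : W2 κ x y = 0 := by
  unfold W2; rw [if_neg]; push_neg; exact ⟨h1, h2⟩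

/-- Piecewise evaluation of `∫ W2 * f` over subintervals. -/
lemma piece_one {κ y : ℝ} {f : ℝ → ℂ} {a b : ℝ} (hab : a ≤ b)
    (h : ∀ x ∈ Ioo a b, W2 κ x y = 1) :
    ∫ x in a..b, ((W2 κ x y : ℝ) : ℂ) * f x = ∫ x in a..b, f x := by
  rw [intervalIntegral.integral_of_le hab, intervalIntegral.integral_of_le hab,
    integral_Ioc_eq_integral_Ioo, integral_Ioc_eq_integral_Ioo]
  apply setIntegral_congr_fun measurableSet_Ioo
  intro x hx; simp only []; rw [h x hx]; simp

lemma piece_zero {κ y : ℝ} {f : ℝ → ℂ} {a b : ℝ} (hab : a ≤ b)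
    (h : ∀ x ∈ Ioo a b, W2 κ x y = 0) :
    ∫ x in a..b, ((W2 κ x y : ℝ) : ℂ) * f x = 0 := by
  rw [intervalIntegral.integral_of_le hab, integral_Ioc_eq_integral_Ioo]
  rw [setIntegral_congr_fun measurableSet_Ioo (g := fun _ => (0:ℂ))
    (fun x hx => by simp only []; rw [h x hx]; simp)]
  simp

lemma W2_int {κ y : ℝ} (hκ0 : 0 < κ) (hκ2 : κ < 1/2) (hy0 : 0 ≤ y) (hy1 : y ≤ 1)
    {f : ℝ → ℂ} (hf : Continuous f) (hper : ∀ x, f (x + 1) = f x) :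
    ∫ x in Icc (0:ℝ) 1, ((W2 κ x y : ℝ) : ℂ) * f x = ∫ x in (y - κ)..(y + κ), f x := by
  have hgi := intervalIntegrable_W2mul κ y hf
  have hfi : ∀ a b : ℝ, IntervalIntegrable f volume a b := fun a b => hf.intervalIntegrable a b
  have hshift : ∀ a b : ℝ, ∫ x in a..b, f x = ∫ x in (a+1)..(b+1), f x := by
    intro a b
    have h1 : ∫ x in a..b, f x = ∫ x in a..b, f (x+1) :=
      intervalIntegral.integral_congr fun x _ => (hper x).symm
    rw [h1, intervalIntegral.integral_comp_add_right]
  rw [MeasureTheory.integral_Icc_eq_integral_Ioc, ← intervalIntegral.integral_of_le zero_le_one]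
  rcases le_or_gt y κ with hc | hc
  · -- y ≤ κ
    have hb1 : (0:ℝ) ≤ y + κ := by linarith
    have hb2 : y + κ ≤ y + 1 - κ := by linarith
    have hb3 : y + 1 - κ ≤ 1 := by linarith
    rw [← intervalIntegral.integral_add_adjacent_intervals (b := y + κ) (hgi _ _) (hgi _ _),
        ← intervalIntegral.integral_add_adjacent_intervals (a := y + κ) (b := y + 1 - κ)
          (hgi _ _) (hgi _ _)]
    have e1 := piece_one (κ := κ) (y := y) (f := f) hb1 (by
      intro x hx; obtain ⟨h1, h2⟩ := hx
      exact W2_eq_one (Or.inl (abs_le.2 ⟨by linarith, by linarith⟩)))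
    have e2 := piece_zero (κ := κ) (y := y) (f := f) hb2 (by
      intro x hx; obtain ⟨h1, h2⟩ := hx
      have habs : |x - y| = x - y := abs_of_pos (by linarith)
      exact W2_eq_zero (by rw [habs]; linarith) (by rw [habs]; linarith))
    have e3 := piece_one (κ := κ) (y := y) (f := f) hb3 (by
      intro x hx; obtain ⟨h1, h2⟩ := hx
      have habs : |x - y| = x - y := abs_of_pos (by linarith)
      exact W2_eq_one (Or.inr (by rw [habs]; linarith)))
    rw [e1, e2, e3]
    have hsplit : ∫ x in (y-κ)..(y+κ), f x
        = (∫ x in (y-κ)..(0:ℝ), f x) + ∫ x in (0:ℝ)..(y+κ), f x :=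
      (intervalIntegral.integral_add_adjacent_intervals (hfi _ _) (hfi _ _)).symm
    have hper1 : ∫ x in (y-κ)..(0:ℝ), f x = ∫ x in (y+1-κ)..1, f x := by
      rw [hshift (y-κ) 0, show y - κ + 1 = y + 1 - κ from by ring,
        show (0:ℝ) + 1 = 1 from by norm_num]
    rw [hsplit, hper1]; ring
  · rcases le_or_gt y (1 - κ) with hc2 | hc2
    · -- κ < y ≤ 1 - κ
      have hb1 : (0:ℝ) ≤ y - κ := by linarith
      have hb2 : y - κ ≤ y + κ := by linarith
      have hb3 : y + κ ≤ 1 := by linarith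
      rw [← intervalIntegral.integral_add_adjacent_intervals (b := y - κ) (hgi _ _) (hgi _ _),
          ← intervalIntegral.integral_add_adjacent_intervals (a := y - κ) (b := y + κ)
            (hgi _ _) (hgi _ _)]
      have e1 := piece_zero (κ := κ) (y := y) (f := f) hb1 (by
        intro x hx; obtain ⟨h1, h2⟩ := hx
        have habs : |x - y| = y - x := by rw [abs_sub_comm]; exact abs_of_pos (by linarith)
        exact W2_eq_zero (by rw [habs]; linarith) (by rw [habs]; linarith))
      have e2 := piece_one (κ := κ) (y := y) (f := f) hb2 (by
        intro x hx; obtain ⟨h1, h2⟩ := hx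
        exact W2_eq_one (Or.inl (abs_le.2 ⟨by linarith, by linarith⟩)))
      have e3 := piece_zero (κ := κ) (y := y) (f := f) hb3 (by
        intro x hx; obtain ⟨h1, h2⟩ := hx
        have habs : |x - y| = x - y := abs_of_pos (by linarith)
        exact W2_eq_zero (by rw [habs]; linarith) (by rw [habs]; linarith))
      rw [e1, e2, e3]; ring
    · -- 1 - κ < y
      have hb1 : (0:ℝ) ≤ y - 1 + κ := by linarith
      have hb2 : y - 1 + κ ≤ y - κ := by linarith
      have hb3 : y - κ ≤ 1 := by linarith
      rw [← intervalIntegral.integral_add_adjacent_intervals (b := y - 1 + κ) (hgi _ _) (hgi _ _),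
          ← intervalIntegral.integral_add_adjacent_intervals (a := y - 1 + κ) (b := y - κ)
            (hgi _ _) (hgi _ _)]
      have e1 := piece_one (κ := κ) (y := y) (f := f) hb1 (by
        intro x hx; obtain ⟨h1, h2⟩ := hx
        have habs : |x - y| = y - x := by rw [abs_sub_comm]; exact abs_of_pos (by linarith)
        exact W2_eq_one (Or.inr (by rw [habs]; linarith)))
      have e2 := piece_zero (κ := κ) (y := y) (f := f) hb2 (by
        intro x hx; obtain ⟨h1, h2⟩ := hx
        have habs : |x - y| = y - x := by rw [abs_sub_comm]; exact abs_of_pos (by linarith)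
        exact W2_eq_zero (by rw [habs]; linarith) (by rw [habs]; linarith))
      have e3 := piece_one (κ := κ) (y := y) (f := f) hb3 (by
        intro x hx; obtain ⟨h1, h2⟩ := hx
        exact W2_eq_one (Or.inl (abs_le.2 ⟨by linarith, by linarith⟩)))
      rw [e1, e2, e3]
      have hsplit : ∫ x in (y-κ)..(y+κ), f x
          = (∫ x in (y-κ)..(1:ℝ), f x) + ∫ x in (1:ℝ)..(y+κ), f x :=
        (intervalIntegral.integral_add_adjacent_intervals (hfi _ _) (hfi _ _)).symm
      have hper1 : ∫ x in (0:ℝ)..(y-1+κ), f x = ∫ x in (1:ℝ)..(y+κ), f x := by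
        rw [hshift 0 (y-1+κ), show y - 1 + κ + 1 = y + κ from by ring,
          show (0:ℝ) + 1 = 1 from by norm_num]
      rw [hsplit, hper1]; ring

lemma E_zero' (n : ℤ) : E n 0 = 1 := by simp [E]

lemma E_int (n : ℤ) : ∫ x in Icc (0:ℝ) 1, E n x = if n = 0 then 1 else 0 := by
  rcases eq_or_ne n 0 with rfl | hn
  · simp only [E_zero_eq, if_pos rfl]
    rw [MeasureTheory.setIntegral_const]
    simp [Real.volume_Icc]
  · rw [if_neg hn, MeasureTheory.integral_Icc_eq_integral_Ioc,
      ← intervalIntegral.integral_of_le zero_le_one, intE hn, E_one, E_zero']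
    simp

lemma W2_exp {κ y : ℝ} (hκ0 : 0 < κ) (hκ2 : κ < 1/2) (hy0 : 0 ≤ y) (hy1 : y ≤ 1) (n : ℤ) :
    ∫ x in Icc (0:ℝ) 1, ((W2 κ x y : ℝ) : ℂ) * E n x
      = if n = 0 then ((2 * κ : ℝ) : ℂ)
        else E n y * ((Real.sin (2 * π * n * κ) / (π * n) : ℝ) : ℂ) := by
  rw [W2_int hκ0 hκ2 hy0 hy1 (contE n) (E_per n)]
  rcases eq_or_ne n 0 with rfl | hn
  · simp only [E_zero_eq, if_pos rfl]
    rw [intervalIntegral.integral_const]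
    push_cast
    rw [show y + κ - (y - κ) = 2 * κ from by ring]
    simp
  · rw [if_neg hn, intE hn]
    have h2 : E n (y - κ) = E n y * E n (-κ) := by
      rw [show y - κ = y + (-κ) from by ring, E_add]
    rw [E_add n y κ, h2,
      show E n y * E n κ - E n y * E n (-κ) = E n y * (E n κ - E n (-κ)) from by ring,
      mul_div_assoc, sin_formula hn]

instance : IsProbabilityMeasure μI := by
  constructor
  unfold μI
  rw [Measure.restrict_apply_univ]
  simp [Real.volume_Icc]

lemma muI_def (f : ℝ → ℂ) : ∫ x, f x ∂μI = ∫ x in Icc (0:ℝ) 1, f x := rfl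

lemma ae_mem_Icc : ∀ᵐ x ∂μI, x ∈ Icc (0:ℝ) 1 := ae_restrict_mem measurableSet_Icc

lemma g_norm_le (p K κ a b : ℝ) : ‖((p - 2*K*W2 κ a b : ℝ):ℂ)‖ ≤ |p| + 2*|K| := by
  rw [Complex.norm_real, Real.norm_eq_abs]
  have h0 := W2_nonneg κ a b
  have h1 := W2_le_one κ a b
  have h2 : |2*K*W2 κ a b| ≤ 2*|K| := by
    rw [abs_mul]
    have : |2*K| = 2*|K| := by rw [abs_mul]; norm_num
    rw [this]
    have h3 : |W2 κ a b| ≤ 1 := by rw [abs_of_nonneg h0]; exact h1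
    nlinarith [abs_nonneg K, abs_nonneg (W2 κ a b)]
  calc |p - 2*K*W2 κ a b| ≤ |p| + |2*K*W2 κ a b| := abs_sub p _
    _ ≤ |p| + 2*|K| := by linarith

lemma meas_g2 (p K κ : ℝ) : Measurable (fun z : ℝ × ℝ => ((p - 2*K*W2 κ z.1 z.2 : ℝ):ℂ)) := by
  apply Complex.measurable_ofReal.comp
  apply Measurable.sub measurable_const
  apply Measurable.const_mul
  unfold W2
  have h : Measurable fun z : ℝ × ℝ => |z.1 - z.2| :=
    (measurable_fst.sub measurable_snd).abs
  exact Measurable.ite ((measurableSet_le h measurable_const).union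
    (measurableSet_le measurable_const h)) measurable_const measurable_const

lemma integrable_W2E (κ y : ℝ) (n : ℤ) :
    Integrable (fun x => ((W2 κ x y : ℝ):ℂ) * E n x) μI := by
  apply (integrable_const (1:ℝ)).mono'
  · exact ((Complex.measurable_ofReal.comp (measurable_W2 κ y)).mul
      (contE n).measurable).aestronglyMeasurable
  · filter_upwards with x
    rw [norm_mul]
    have h1 : ‖((W2 κ x y : ℝ) : ℂ)‖ ≤ 1 := by
      rw [Complex.norm_real, Real.norm_eq_abs, abs_of_nonneg (W2_nonneg κ x y)]
      exact W2_le_one κ x y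
    have h2 := norm_E n x
    nlinarith [norm_nonneg (E n x), norm_nonneg (((W2 κ x y : ℝ):ℂ))]

lemma eigen_relation {κ p K : ℝ} (hκ0 : 0 < κ) (hκ2 : κ < 1/2)
    {lam : ℂ} {φ : ℝ → ℂ} (hφ : MeasureTheory.MemLp φ 2 μI)
    (heig : (fun x => LopC p K κ φ x) =ᵐ[μI] fun x => lam * φ x) (n : ℤ) :
    lam * (∫ x, E n x * φ x ∂μI)
      = (if n = 0 then 0
          else ((4*K*κ - p - 2*K*(Real.sin (2*π*n*κ)/(π*n)) : ℝ) : ℂ))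
        * ∫ x, E n x * φ x ∂μI := by
  have hφi : Integrable φ μI := hφ.integrable one_le_two
  set gC : ℝ → ℝ → ℂ := fun a b => ((p - 2*K*W2 κ a b : ℝ):ℂ) with hgC
  set c : ℂ := ∫ x, E n x * φ x ∂μI with hc
  set C : ℝ := |p| + 2*|K| with hC
  -- integrability of the two parts on the product
  have hmeasA : AEStronglyMeasurable (fun z : ℝ × ℝ => E n z.1 * gC z.1 z.2) (μI.prod μI) :=
    (((contE n).comp continuous_fst).aestronglyMeasurable.mul
      (meas_g2 p K κ).aestronglyMeasurable)
  have hEg_bound : ∀ z : ℝ × ℝ, ‖E n z.1 * gC z.1 z.2‖ ≤ C := by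
    intro z
    rw [norm_mul]
    have h1 := norm_E n z.1
    have h2 := g_norm_le p K κ z.1 z.2
    have h3 : (0:ℝ) ≤ C := le_trans (norm_nonneg _) h2
    nlinarith [norm_nonneg (E n z.1), norm_nonneg (gC z.1 z.2)]
  have hA : Integrable (Function.uncurry fun x y => E n x * gC x y * φ y) (μI.prod μI) := by
    apply Integrable.mono' (g := fun z : ℝ × ℝ => C * ‖φ z.2‖)
      ((integrable_const C).mul_prod hφi.norm)
      (hmeasA.mul hφ.1.comp_snd)
    filter_upwards with z
    show ‖E n z.1 * gC z.1 z.2 * φ z.2‖ ≤ C * ‖φ z.2‖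
    rw [norm_mul]
    exact mul_le_mul_of_nonneg_right (hEg_bound z) (norm_nonneg _)
  have hB : Integrable (Function.uncurry fun x y => E n x * gC x y * φ x) (μI.prod μI) := by
    apply Integrable.mono' (g := fun z : ℝ × ℝ => ‖φ z.1‖ * C)
      (hφi.norm.mul_prod (integrable_const C))
      (hmeasA.mul hφ.1.comp_fst)
    filter_upwards with z
    show ‖E n z.1 * gC z.1 z.2 * φ z.1‖ ≤ ‖φ z.1‖ * C
    rw [norm_mul, mul_comm ‖φ z.1‖ C]
    exact mul_le_mul_of_nonneg_right (hEg_bound z) (norm_nonneg _)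
  have hH : Integrable (Function.uncurry fun x y => E n x * (gC x y * (φ y - φ x)))
      (μI.prod μI) := by
    have heq : (Function.uncurry fun x y => E n x * (gC x y * (φ y - φ x)))
        = fun z : ℝ × ℝ => (Function.uncurry fun x y => E n x * gC x y * φ y) z
            - (Function.uncurry fun x y => E n x * gC x y * φ x) z := by
      ext z; simp only [Function.uncurry_def]; ring
    rw [heq]; exact hA.sub hB
  -- the chain of equalities
  have step1 : lam * c = ∫ x, E n x * (lam * φ x) ∂μI := by
    rw [hc, ← MeasureTheory.integral_const_mul]
    exact integral_congr_ae (Filter.Eventually.of_forall fun x => by ring)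
  have step2 : ∫ x, E n x * (lam * φ x) ∂μI = ∫ x, E n x * LopC p K κ φ x ∂μI := by
    apply integral_congr_ae
    filter_upwards [heig] with x hx
    rw [hx]
  have step3 : ∫ x, E n x * LopC p K κ φ x ∂μI
      = ∫ x, ∫ y, E n x * (gC x y * (φ y - φ x)) ∂μI ∂μI := by
    apply integral_congr_ae
    apply Filter.Eventually.of_forall
    intro x
    show E n x * LopC p K κ φ x = ∫ y, E n x * (gC x y * (φ y - φ x)) ∂μI
    have hL : LopC p K κ φ x = ∫ y, gC x y * (φ y - φ x) ∂μI := rfl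
    rw [hL, ← MeasureTheory.integral_const_mul]
  have step4 : ∫ x, ∫ y, E n x * (gC x y * (φ y - φ x)) ∂μI ∂μI
      = (∫ z : ℝ × ℝ, E n z.1 * gC z.1 z.2 * φ z.2 ∂(μI.prod μI))
        - ∫ z : ℝ × ℝ, E n z.1 * gC z.1 z.2 * φ z.1 ∂(μI.prod μI) := by
    rw [MeasureTheory.integral_integral hH]
    rw [show (fun z : ℝ × ℝ => E n z.1 * (gC z.1 z.2 * (φ z.2 - φ z.1)))
        = fun z : ℝ × ℝ => (E n z.1 * gC z.1 z.2 * φ z.2) - (E n z.1 * gC z.1 z.2 * φ z.1)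
      from by ext z; ring]
    exact MeasureTheory.integral_sub hA hB
  -- restate product integrabilities with clean types
  have hsubA : ∀ᵐ x ∂μI, Integrable (fun y => E n x * gC x y * φ y) μI := hA.prod_right_ae
  have hsubB : ∀ᵐ x ∂μI, Integrable (fun y => E n x * gC x y * φ x) μI := hB.prod_right_ae
  have step4 : ∫ x, ∫ y, E n x * (gC x y * (φ y - φ x)) ∂μI ∂μI
      = (∫ x, ∫ y, E n x * gC x y * φ y ∂μI ∂μI)
        - ∫ x, ∫ y, E n x * gC x y * φ x ∂μI ∂μI := by
    have hiA : Integrable (fun x => ∫ y, E n x * gC x y * φ y ∂μI) μI := hA.integral_prod_left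
    have hiB : Integrable (fun x => ∫ y, E n x * gC x y * φ x ∂μI) μI := hB.integral_prod_left
    rw [← MeasureTheory.integral_sub hiA hiB]
    apply integral_congr_ae
    filter_upwards [hsubA, hsubB] with x h1 h2
    have e := MeasureTheory.integral_sub h1 h2
    rw [← e]
    exact integral_congr_ae (Filter.Eventually.of_forall fun y => by ring)
  set sC : ℂ := ((Real.sin (2*π*(n:ℝ)*κ)/(π*(n:ℝ)) : ℝ):ℂ) with hsC
  have W2exp' : ∀ y ∈ Icc (0:ℝ) 1, (∫ x, ((W2 κ x y : ℝ):ℂ) * E n x ∂μI)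
      = if n = 0 then ((2*κ:ℝ):ℂ) else E n y * sC := fun y hy => W2_exp hκ0 hκ2 hy.1 hy.2 n
  have W2exp0 : ∀ x ∈ Icc (0:ℝ) 1, (∫ y, ((W2 κ y x : ℝ):ℂ) * E 0 y ∂μI) = ((2*κ:ℝ):ℂ) := by
    intro x hx
    rw [show (∫ y, ((W2 κ y x : ℝ):ℂ) * E 0 y ∂μI) = _ from W2_exp hκ0 hκ2 hx.1 hx.2 0]
    simp
  have Eint' : (∫ x, E n x ∂μI) = if n = 0 then 1 else 0 := E_int n
  -- inner integral of gC in the second variable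
  have hg_int_snd : ∀ x ∈ Icc (0:ℝ) 1, (∫ y, gC x y ∂μI) = ((p - 4*K*κ : ℝ):ℂ) := by
    intro x hx
    have h1 : ∀ y : ℝ, gC x y = ((p:ℝ):ℂ) - (2*K:ℂ) * (((W2 κ y x : ℝ):ℂ) * E 0 y) := by
      intro y
      show ((p - 2*K*W2 κ x y : ℝ):ℂ) = ((p:ℝ):ℂ) - (2*K:ℂ) * (((W2 κ y x : ℝ):ℂ) * E 0 y)
      rw [W2_symm κ x y]
      simp only [E_zero_eq, mul_one]
      push_cast; ring
    rw [integral_congr_ae (Filter.Eventually.of_forall h1),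
      MeasureTheory.integral_sub (integrable_const _) ((integrable_W2E κ x 0).const_mul _),
      MeasureTheory.integral_const, MeasureTheory.integral_const_mul, W2exp0 x hx]
    simp only [probReal_univ, measure_univ, ENNReal.toReal_one, one_smul]
    push_cast; ring
  -- inner integral of gC * E in the first variable
  have hg_int_fst : ∀ y ∈ Icc (0:ℝ) 1, (∫ x, gC x y * E n x ∂μI)
      = if n = 0 then ((p - 4*K*κ:ℝ):ℂ) else (-2*K:ℂ) * sC * E n y := by
    intro y hy
    have h1 : ∀ x : ℝ, gC x y * E n x
        = ((p:ℝ):ℂ) * E n x - (2*K:ℂ) * (((W2 κ x y : ℝ):ℂ) * E n x) := by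
      intro x
      show ((p - 2*K*W2 κ x y : ℝ):ℂ) * E n x
        = ((p:ℝ):ℂ) * E n x - (2*K:ℂ) * (((W2 κ x y : ℝ):ℂ) * E n x)
      push_cast; ring
    have hEint : Integrable (fun x => ((p:ℝ):ℂ) * E n x) μI :=
      (Continuous.integrableOn_Icc (continuous_const.mul (contE n)))
    rw [integral_congr_ae (Filter.Eventually.of_forall h1),
      MeasureTheory.integral_sub hEint ((integrable_W2E κ y n).const_mul _),
      MeasureTheory.integral_const_mul, MeasureTheory.integral_const_mul, Eint', W2exp' y hy]
    rcases eq_or_ne n 0 with rfl | hn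
    · simp only [if_pos rfl]; push_cast; ring
    · simp only [if_neg hn]; ring
  -- evaluate the B-part
  have hBval : (∫ x, ∫ y, E n x * gC x y * φ x ∂μI ∂μI) = ((p - 4*K*κ:ℝ):ℂ) * c := by
    have h5 : ∀ᵐ x ∂μI, (∫ y, E n x * gC x y * φ x ∂μI)
        = ((p - 4*K*κ:ℝ):ℂ) * (E n x * φ x) := by
      filter_upwards [ae_mem_Icc] with x hx
      have h6 : ∀ y : ℝ, E n x * gC x y * φ x = (E n x * φ x) * gC x y := fun y => by ring
      rw [integral_congr_ae (Filter.Eventually.of_forall h6),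
        MeasureTheory.integral_const_mul, hg_int_snd x hx]
      ring
    rw [integral_congr_ae h5, MeasureTheory.integral_const_mul, ← hc]
  -- evaluate the A-part
  have hAval : (∫ x, ∫ y, E n x * gC x y * φ y ∂μI ∂μI)
      = (if n = 0 then ((p - 4*K*κ:ℝ):ℂ) else (-2*K:ℂ) * sC) * c := by
    have hswap : (∫ x, ∫ y, E n x * gC x y * φ y ∂μI ∂μI)
        = ∫ y, ∫ x, E n x * gC x y * φ y ∂μI ∂μI :=
      MeasureTheory.integral_integral_swap hA
    rw [hswap]
    have h5 : ∀ᵐ y ∂μI, (∫ x, E n x * gC x y * φ y ∂μI)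
        = (if n = 0 then ((p - 4*K*κ:ℝ):ℂ) else (-2*K:ℂ) * sC) * (E n y * φ y) := by
      filter_upwards [ae_mem_Icc] with y hy
      have h6 : ∀ x : ℝ, E n x * gC x y * φ y = φ y * (gC x y * E n x) := fun x => by ring
      rw [integral_congr_ae (Filter.Eventually.of_forall h6),
        MeasureTheory.integral_const_mul, hg_int_fst y hy]
      rcases eq_or_ne n 0 with rfl | hn
      · simp only [if_pos rfl, E_zero_eq]; ring
      · simp only [if_neg hn]; ring
    rw [integral_congr_ae h5, MeasureTheory.integral_const_mul, ← hc]
  rw [step1, step2, step3, step4, hAval, hBval]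
  rcases eq_or_ne n 0 with rfl | hn
  · norm_num
  · simp only [if_neg hn, hsC]; push_cast; ring


lemma fourier_complete {φ : ℝ → ℂ} (hφ : MeasureTheory.MemLp φ 2 μI)
    (hsm : MeasureTheory.StronglyMeasurable φ)
    (hall : ∀ n : ℤ, (∫ x, E n x * φ x ∂μI) = 0) : φ =ᵐ[μI] fun _ => 0 := by
  haveI : Fact ((0:ℝ) < 1) := ⟨one_pos⟩
  set ψ : AddCircle (1:ℝ) → ℂ := AddCircle.liftIoc 1 0 φ with hψdef
  have hmeasψ : Measurable ψ := by
    have : ψ = fun z => φ (((AddCircle.measurableEquivIoc 1 0) z : Ioc (0:ℝ) (0+1)) : ℝ) := rfl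
    rw [this]
    exact hsm.measurable.comp
      (measurable_subtype_coe.comp (AddCircle.measurableEquivIoc 1 0).measurable)
  have hmp := AddCircle.measurePreserving_mk 1 0
  have hν : MeasureTheory.volume.restrict (Ioc (0:ℝ) (0+1)) = μI := by
    rw [zero_add]
    show MeasureTheory.volume.restrict (Ioc (0:ℝ) 1) = MeasureTheory.volume.restrict (Icc 0 1)
    exact Measure.restrict_congr_set Ioc_ae_eq_Icc
  have hcomp : (ψ ∘ (QuotientAddGroup.mk : ℝ → AddCircle (1:ℝ)))
      =ᵐ[MeasureTheory.volume.restrict (Ioc (0:ℝ) (0+1))] φ := by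
    filter_upwards [ae_restrict_mem measurableSet_Ioc] with x hx
    exact AddCircle.liftIoc_coe_apply hx
  have hvol : (MeasureTheory.volume : Measure (AddCircle (1:ℝ))) = AddCircle.haarAddCircle := by
    rw [AddCircle.volume_eq_smul_haarAddCircle]
    simp
  -- ψ is MemLp for the haar measure on the circle
  have hψℒp : MeasureTheory.MemLp ψ 2 AddCircle.haarAddCircle := by
    rw [← hvol, ← hmp.map_eq]
    rw [memLp_map_measure_iff
      (by rw [hmp.map_eq, hvol]; exact hmeasψ.stronglyMeasurable.aestronglyMeasurable)
      hmp.measurable.aemeasurable]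
    exact (MeasureTheory.MemLp.ae_eq hcomp.symm) (by rw [hν]; exact hφ)
  -- all Fourier coefficients of ψ vanish
  have hcoeff : ∀ n : ℤ, fourierCoeff ψ n = 0 := by
    intro n
    rw [hψdef, fourierCoeff_liftIoc_eq]
    have h1 : fourierCoeffOn (by norm_num : (0:ℝ) < 0 + 1) φ n
        = ∫ x in (0:ℝ)..(0+1), (fourier (-n) (x : AddCircle (0+1-0:ℝ))) • φ x := by
      rw [fourierCoeffOn_eq_integral]
      norm_num
    rw [h1]
    have h2 : ∀ x : ℝ, (fourier (-n) (x : AddCircle (0+1-0:ℝ))) • φ x = E (-n) x * φ x := by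
      intro x
      rw [smul_eq_mul]
      congr 1
      rw [fourier_coe_apply]
      show Complex.exp (2 * ↑π * Complex.I * ↑(-n) * ↑x / ↑(0+1-0:ℝ))
        = Complex.exp (2 * ↑π * Complex.I * ↑(-n) * ↑x)
      norm_num
    rw [intervalIntegral.integral_congr (fun x _ => h2 x),
      intervalIntegral.integral_of_le (by norm_num : (0:ℝ) ≤ 0+1), hν]
    exact hall (-n)
  -- conclude ψ = 0 a.e.
  set f := hψℒp.toLp ψ with hf
  have hrepr0 : fourierBasis.repr f = 0 := by
    apply lp.ext
    funext i
    have h3 : fourierCoeff (⇑f) i = fourierCoeff ψ i := by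
      apply integral_congr_ae
      filter_upwards [hψℒp.coeFn_toLp] with t ht
      rw [ht]
    show (fourierBasis.repr f) i = (0 : ↥(lp (fun _ : ℤ => ℂ) 2)) i
    rw [fourierBasis_repr, h3, hcoeff i]
    simp
  have hfzero : f = 0 := by
    apply fourierBasis.repr.injective
    rw [hrepr0, map_zero]
  have hψ0 : ψ =ᵐ[AddCircle.haarAddCircle] fun _ => (0:ℂ) := by
    have h4 : ⇑f =ᵐ[AddCircle.haarAddCircle] ψ := hψℒp.coeFn_toLp
    have h5 : ⇑f =ᵐ[AddCircle.haarAddCircle] fun _ => (0:ℂ) := by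
      rw [hfzero]
      exact MeasureTheory.Lp.coeFn_zero ℂ 2 _
    exact h4.symm.trans h5
  -- pull back along the quotient map
  have hψ0' : ψ =ᵐ[Measure.map (QuotientAddGroup.mk : ℝ → AddCircle (1:ℝ))
      (MeasureTheory.volume.restrict (Ioc (0:ℝ) (0+1)))] fun _ => (0:ℂ) := by
    rw [hmp.map_eq, hvol]
    exact hψ0
  have h6 := MeasureTheory.ae_eq_comp hmp.measurable.aemeasurable hψ0'
  rw [← hν]
  filter_upwards [h6, hcomp] with x h7 h8
  rw [← h8]
  exact h7

end LopAux

open LopAux in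
/-- The only eigenvalues of `𝓛` on `L²(I;ℂ)` are `0` and
`λ_ℓ = 4Kκ - p - (2K/(πℓ)) sin(2πℓκ)`, `ℓ ∈ ℕ`. -/
theorem Lop_eigenvalues_classification
    (κ p K : ℝ) (hκ : κ ∈ Set.Ioo (0:ℝ) (1/2)) (hp : 0 < p)
    (lam : ℂ) (φ : ℝ → ℂ) (hφ : MeasureTheory.MemLp φ 2 μI)
    (hφ0 : ¬ (φ =ᵐ[μI] fun _ => (0:ℂ)))
    (heig : (fun x => LopC p K κ φ x) =ᵐ[μI] fun x => lam * φ x) :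
    lam = 0 ∨ ∃ ℓ : ℕ, 1 ≤ ℓ ∧
      lam = ((4 * K * κ - p - (2 * K / (π * ℓ)) * Real.sin (2 * π * ℓ * κ) : ℝ) : ℂ) := by
  classical
  by_contra hcon
  push_neg at hcon
  obtain ⟨hlam0, hlam⟩ := hcon
  obtain ⟨hκ0, hκ2⟩ := hκ
  -- replace φ by a strongly measurable representative
  set φ' := hφ.1.mk φ with hφ'def
  have hsm : MeasureTheory.StronglyMeasurable φ' := hφ.1.stronglyMeasurable_mk
  have hae : φ =ᵐ[μI] φ' := hφ.1.ae_eq_mk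
  have hφ' : MeasureTheory.MemLp φ' 2 μI := hφ.ae_eq hae
  have heig' : (fun x => LopC p K κ φ' x) =ᵐ[μI] fun x => lam * φ' x := by
    filter_upwards [heig, hae] with x hx h2
    have hLL : LopC p K κ φ' x = LopC p K κ φ x := by
      unfold LopC
      apply MeasureTheory.integral_congr_ae
      have hae' : φ =ᵐ[MeasureTheory.volume.restrict (Icc (0:ℝ) 1)] φ' := hae
      filter_upwards [hae'] with y hy
      rw [hy, h2]
    rw [hLL, hx, h2]
  have hczero : ∀ n : ℤ, (∫ x, E n x * φ' x ∂μI) = 0 := by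
    intro n
    have h := eigen_relation hκ0 hκ2 hφ' heig' n
    rcases eq_or_ne n 0 with rfl | hn
    · norm_num at h
      exact h.resolve_left hlam0
    · simp only [if_neg hn] at h
      by_contra hcne
      apply hlam n.natAbs (Int.natAbs_pos.mpr hn)
      have hlamc : lam
          = ((4*K*κ - p - 2*K*(Real.sin (2*π*(n:ℝ)*κ)/(π*(n:ℝ))) : ℝ):ℂ) :=
        mul_right_cancel₀ hcne h
      rw [hlamc]
      apply Complex.ofReal_inj.mpr
      have hπ := Real.pi_ne_zero
      have hm0 : ((n.natAbs:ℝ)) ≠ 0 := Nat.cast_ne_zero.mpr (Int.natAbs_ne_zero.mpr hn)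
      rcases le_or_gt 0 n with hsgn | hsgn
      · have hnr : ((n.natAbs:ℝ)) = (n:ℝ) := by
          rw [Nat.cast_natAbs]
          exact_mod_cast congrArg (fun z : ℤ => (z:ℝ)) (abs_of_nonneg hsgn)
        rw [← hnr]
        field_simp
      · have hnr : ((n.natAbs:ℝ)) = -(n:ℝ) := by
          rw [Nat.cast_natAbs]
          exact_mod_cast congrArg (fun z : ℤ => (z:ℝ)) (abs_of_neg hsgn)
        have hnr2 : ((n:ℤ):ℝ) = -((n.natAbs:ℝ)) := by rw [hnr]; ring
        rw [hnr2, show 2*π*(-((n.natAbs:ℝ)))*κ = -(2*π*(n.natAbs:ℝ)*κ) from by ring,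
          Real.sin_neg]
        field_simp
  exact hφ0 (hae.trans (fourier_complete hφ' hsm hczero))
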